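/- (Example 3.3, closed form of the deformed twisting.) Let R be a commutative ring and q ∈ R. Let A_q be the free R-module with basis {a^kā^l : (k,l) ∈ ℕ×ℕ} with multiplication determined by (a^kā^l)·(a^rā^s) = q^{lr}·a^{k+r}ā^{l+s}, and let B = R[b]. Then A_q is an associative unital R-algebra, and the R-linear map Ψ_q : A_q⊗B → B⊗A_q determined by Ψ_q(a^kā^l ⊗ b^r) = q^{lr}·Σ_{i=0}^{k} binom(k, i)_q·binom(r+i−1, i)_q·(q;q)_i·b^{r+i}⊗a^{k−i}ā^{l+i} is a twisting map for A_q and B. -/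

import Mathlib

/-!
STATEMENT 15 (Example 3.3, closed form of the deformed twisting): over any
commutative ring `R` with `q ∈ R`, the algebra `A_q` is associative and
unital, and
`Ψ_q(a^k ā^l ⊗ b^r) = q^{lr}·Σ_{i=0}^k binom(k,i)_q·binom(r+i−1,i)_q·(q;q)_i·b^{r+i} ⊗ a^{k−i} ā^{l+i}`
is a twisting map for `A_q` and `B = R[b]`.
-/

open TensorProduct

section Defs

variable {k : Type*} [CommRing k]
variable {A B : Type*} [AddCommGroup A] [Module k A] [AddCommGroup B] [Module k B]

/-- `(id_B ⊗ μ) ∘ (ψ ⊗ id_A)` as a map `A ⊗ (B ⊗ A) → B ⊗ A`. -/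
noncomputable def twL (μ : A ⊗[k] A →ₗ[k] A) (ψ : A ⊗[k] B →ₗ[k] B ⊗[k] A) :
    A ⊗[k] (B ⊗[k] A) →ₗ[k] B ⊗[k] A :=
  LinearMap.lTensor B μ ∘ₗ (TensorProduct.assoc k B A A).toLinearMap
    ∘ₗ LinearMap.rTensor A ψ ∘ₗ (TensorProduct.assoc k A B A).symm.toLinearMap

/-- `(ν ⊗ id_A) ∘ (id_B ⊗ ψ)` as a map `(B ⊗ A) ⊗ B → B ⊗ A`. -/
noncomputable def twR (ν : B ⊗[k] B →ₗ[k] B) (ψ : A ⊗[k] B →ₗ[k] B ⊗[k] A) :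
    (B ⊗[k] A) ⊗[k] B →ₗ[k] B ⊗[k] A :=
  LinearMap.rTensor A ν ∘ₗ (TensorProduct.assoc k B B A).symm.toLinearMap
    ∘ₗ LinearMap.lTensor B ψ ∘ₗ (TensorProduct.assoc k B A B).toLinearMap

end Defs

variable (R : Type*) [CommRing R]

/-- The underlying module of `A_q`: the free `R`-module with basis
`{a^k ā^l : (k,l) ∈ ℕ × ℕ}`, a basis element being `Finsupp.single (k,l) 1`. -/
abbrev AqR : Type _ := (ℕ × ℕ) →₀ R

/-- `B = R[b]`, with basis `{b^r = Finsupp.single r 1}`. -/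
abbrev BpolyR : Type _ := AddMonoidAlgebra R ℕ

/-- The multiplication `(a^k ā^l)·(a^r ā^s) = q^{lr}·a^{k+r} ā^{l+s}` of `A_q`. -/
noncomputable def muqR {R : Type*} [CommRing R] (q : R) :
    AqR R →ₗ[R] AqR R →ₗ[R] AqR R :=
  Finsupp.lift (AqR R →ₗ[R] AqR R) R (ℕ × ℕ) fun p =>
    Finsupp.lift (AqR R) R (ℕ × ℕ) fun p' =>
      (q ^ (p.2 * p'.1)) • Finsupp.single (p.1 + p'.1, p.2 + p'.2) (1 : R)

/-- The Gaussian (`q`-)binomial coefficient `binom(m, i)_q` (the value at `q`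
of the Gaussian binomial polynomial), via the `q`-Pascal recursion. -/
noncomputable def qbinomR {R : Type*} [CommRing R] (q : R) : ℕ → ℕ → R
  | _, 0 => 1
  | 0, _ + 1 => 0
  | m + 1, i + 1 => qbinomR q m i + q ^ (i + 1) * qbinomR q m (i + 1)

/-- `(q;q)_i = (1−q)(1−q²)⋯(1−qⁱ)`, with `(q;q)₀ = 1`. -/
noncomputable def qPochhammer' {R : Type*} [CommRing R] (q : R) (i : ℕ) : R :=
  ∏ j ∈ Finset.range i, (1 - q ^ (j + 1))

/-- The map
`Ψ_q(a^k ā^l ⊗ b^r) = q^{lr}·Σ_{i=0}^k binom(k,i)_q binom(r+i−1,i)_q (q;q)_i·b^{r+i} ⊗ a^{k−i} ā^{l+i}`. -/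
noncomputable def psiqR {R : Type*} [CommRing R] (q : R) :
    AqR R ⊗[R] BpolyR R →ₗ[R] BpolyR R ⊗[R] AqR R :=
  TensorProduct.lift <|
    Finsupp.lift (BpolyR R →ₗ[R] BpolyR R ⊗[R] AqR R) R (ℕ × ℕ) fun p =>
      (Finsupp.lift (BpolyR R ⊗[R] AqR R) R ℕ fun r =>
        ∑ i ∈ Finset.range (p.1 + 1),
          (q ^ (p.2 * r) * qbinomR q p.1 i * qbinomR q (r + i - 1) i
              * qPochhammer' q i) •
            ((AddMonoidAlgebra.single (r + i) (1 : R) : BpolyR R)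
              ⊗ₜ[R] (Finsupp.single (p.1 - i, p.2 + i) (1 : R) : AqR R)))
        ∘ₗ (AddMonoidAlgebra.coeffLinearEquiv R).toLinearMap


section ScalarLemmas
variable {R : Type*} [CommRing R] (q : R)

@[simp] lemma qb_zero (m : ℕ) : qbinomR q m 0 = 1 := by cases m <;> rfl

lemma qb_succ (m i : ℕ) : qbinomR q (m+1) (i+1) = qbinomR q m i + q ^ (i+1) * qbinomR q m (i+1) := rfl

lemma qb_eq_zero : ∀ {m i : ℕ}, m < i → qbinomR q m i = 0 := by
  intro m
  induction m with
  | zero => intro i h; cases i with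
    | zero => omega
    | succ n => rfl
  | succ m ih =>
    intro i h
    cases i with
    | zero => omega
    | succ n =>
      rw [qb_succ, ih (by omega), ih (by omega)]
      ring

@[simp] lemma qb_self : ∀ m : ℕ, qbinomR q m m = 1 := by
  intro m
  induction m with
  | zero => rfl
  | succ m ih => rw [qb_succ, ih, qb_eq_zero q (by omega)]; ring

@[simp] lemma qpoch_zero : qPochhammer' q 0 = 1 := rfl

lemma qpoch_succ (i : ℕ) : qPochhammer' q (i+1) = qPochhammer' q i * (1 - q ^ (i+1)) :=
  Finset.prod_range_succ _ _

lemma L3 : ∀ m i : ℕ, i ≤ m →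
    qbinomR q m i * (qPochhammer' q i * qPochhammer' q (m - i)) = qPochhammer' q m := by
  intro m
  induction m with
  | zero => intro i h; interval_cases i; simp
  | succ m ih =>
    intro i h
    cases i with
    | zero => simp
    | succ i =>
      rw [qb_succ]
      have e1 : m + 1 - (i + 1) = m - i := by omega
      rw [e1, qpoch_succ]
      rcases Nat.lt_or_ge i m with hi | hi
      · set d := m - (i+1) with hd
        have e2 : m - i = d + 1 := by omega
        have h1 := ih i (by omega)
        have h2 := ih (i+1) (by omega)
        rw [e2] at h1 ⊢
        rw [qpoch_succ] at h1 h2 ⊢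
        rw [← hd] at h2
        have hq : q ^ (m+1) = q ^ (i+1) * q ^ (d+1) := by
          rw [← pow_add]; congr 1; omega
        rw [qpoch_succ q m, hq]
        linear_combination (1 - q^(i+1)) * h1 + q^(i+1) * (1 - q^(d+1)) * h2
      · have hi' : i = m := by omega
        subst hi'
        rw [qb_self, (qb_eq_zero q (Nat.lt_succ_self i) : qbinomR q i (i+1) = 0),
          Nat.sub_self]
        simp [qpoch_succ]

lemma map_qbinom {S : Type*} [CommRing S] (f : R →+* S) : ∀ m i, f (qbinomR q m i) = qbinomR (f q) m i := by
  intro m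
  induction m with
  | zero => intro i; cases i <;> simp [qbinomR]
  | succ m ih => intro i; cases i with
    | zero => simp
    | succ i => rw [qb_succ, qb_succ, map_add, map_mul, map_pow, ih, ih]

lemma map_qpoch {S : Type*} [CommRing S] (f : R →+* S) (i : ℕ) :
    f (qPochhammer' q i) = qPochhammer' (f q) i := by
  simp [qPochhammer']

lemma poch_ne_zero (i : ℕ) : qPochhammer' (Polynomial.X : Polynomial ℤ) i ≠ 0 := by
  intro h
  have := congrArg (Polynomial.evalRingHom (0 : ℤ)) h
  rw [map_qpoch] at this
  simp only [Polynomial.coe_evalRingHom, Polynomial.eval_X, map_zero] at this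
  have : qPochhammer' (0 : ℤ) i = 1 := by
    simp [qPochhammer', zero_pow]
  omega

lemma E2_int (k i s : ℕ) :
    qbinomR (Polynomial.X : Polynomial ℤ) k i * qbinomR Polynomial.X (k-i) s *
      (qPochhammer' Polynomial.X i * qPochhammer' Polynomial.X s)
    = qbinomR Polynomial.X k (i+s) * qPochhammer' (Polynomial.X : Polynomial ℤ) (i+s) := by
  set X : Polynomial ℤ := Polynomial.X
  rcases le_or_gt (i+s) k with h | h
  · apply mul_right_cancel₀ (poch_ne_zero (k - (i+s)))
    have h1 := L3 X k i (by omega)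
    have h2 := L3 X (k-i) s (by omega)
    have h3 := L3 X k (i+s) (by omega)
    have e1 : k - i - s = k - (i+s) := by omega
    rw [e1] at h2
    linear_combination qbinomR X k i * qPochhammer' X i * h2 + h1 - h3
  · rw [qb_eq_zero X h]
    rcases le_or_gt i k with h' | h'
    · rw [qb_eq_zero X (show k - i < s by omega)]; ring
    · rw [qb_eq_zero X h']; ring

lemma E1_int (r i s : ℕ) :
    qbinomR (Polynomial.X : Polynomial ℤ) (r+i-1) i * qbinomR Polynomial.X (r+(i+s)-1) s *
      (qPochhammer' Polynomial.X i * qPochhammer' Polynomial.X s)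
    = qbinomR Polynomial.X (r+(i+s)-1) (i+s) * qPochhammer' (Polynomial.X : Polynomial ℤ) (i+s) := by
  set X : Polynomial ℤ := Polynomial.X
  cases r with
  | zero =>
    cases i with
    | zero => simp
    | succ i =>
      rw [qb_eq_zero X (show 0+(i+1)-1 < i+1 by omega),
        qb_eq_zero X (show 0+(i+1+s)-1 < i+1+s by omega)]
      ring
  | succ r =>
    have e1 : r + 1 + i - 1 = r + i := by omega
    have e2 : r + 1 + (i+s) - 1 = r + (i+s) := by omega
    rw [e1, e2]
    apply mul_right_cancel₀ (poch_ne_zero r)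
    have a1 := L3 X (r+i) i (by omega)
    have a2 := L3 X (r+(i+s)) s (by omega)
    have a3 := L3 X (r+(i+s)) (i+s) (by omega)
    have f1 : r + i - i = r := by omega
    have f2 : r + (i+s) - s = r + i := by omega
    have f3 : r + (i+s) - (i+s) = r := by omega
    rw [f1] at a1; rw [f2] at a2; rw [f3] at a3
    linear_combination qbinomR X (r+(i+s)) s * qPochhammer' X s * a1 + a2 - a3

lemma aeval_qbinom (m i : ℕ) :
    (Polynomial.aeval q) (qbinomR (Polynomial.X : Polynomial ℤ) m i) = qbinomR q m i := by
  have h := map_qbinom (Polynomial.X : Polynomial ℤ) (Polynomial.aeval q).toRingHom m i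
  simpa using h

lemma aeval_qpoch (i : ℕ) :
    (Polynomial.aeval q) (qPochhammer' (Polynomial.X : Polynomial ℤ) i) = qPochhammer' q i := by
  have h := map_qpoch (Polynomial.X : Polynomial ℤ) (Polynomial.aeval q).toRingHom i
  simpa using h

lemma E2 (k i s : ℕ) :
    qbinomR q k i * qbinomR q (k-i) s * (qPochhammer' q i * qPochhammer' q s)
    = qbinomR q k (i+s) * qPochhammer' q (i+s) := by
  have h := congrArg (Polynomial.aeval q) (E2_int k i s)
  simpa [aeval_qbinom, aeval_qpoch] using h

lemma E1 (r i s : ℕ) :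
    qbinomR q (r+i-1) i * qbinomR q (r+(i+s)-1) s * (qPochhammer' q i * qPochhammer' q s)
    = qbinomR q (r+(i+s)-1) (i+s) * qPochhammer' q (i+s) := by
  have h := congrArg (Polynomial.aeval q) (E1_int r i s)
  simpa [aeval_qbinom, aeval_qpoch] using h

lemma V1 (k m : ℕ) : ∀ j : ℕ,
    (∑ i ∈ Finset.range (j+1), q^((j-i)*(m-i)) * qbinomR q m i * qbinomR q k (j-i))
      = qbinomR q (k+m) j := by
  induction m with
  | zero =>
    intro j
    rw [Finset.sum_eq_single 0]
    · simp
    · intro b _ hb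
      rw [qb_eq_zero q (show 0 < b by omega)]; ring
    · intro h; exact absurd (Finset.mem_range.2 (by omega)) h
  | succ m ih =>
    intro j
    cases j with
    | zero => simp
    | succ j =>
      rw [Finset.sum_range_succ']
      have split : ∀ i ∈ Finset.range (j+1),
          q^((j+1-(i+1))*(m+1-(i+1))) * qbinomR q (m+1) (i+1) * qbinomR q k (j+1-(i+1))
          = q^((j-i)*(m-i)) * qbinomR q m i * qbinomR q k (j-i)
            + q^(j+1) * (q^((j+1-(i+1))*(m-(i+1))) * qbinomR q m (i+1) * qbinomR q k (j+1-(i+1))) := by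
        intro i hi
        have hij : i ≤ j := by have := Finset.mem_range.1 hi; omega
        have e0 : j + 1 - (i+1) = j - i := by omega
        rw [e0, qb_succ]
        rcases le_or_gt (i+1) m with him | him
        · set d := m - (i+1) with hd
          have e1 : m + 1 - (i+1) = d + 1 := by omega
          have e2 : m - i = d + 1 := by omega
          rw [e1, e2]
          have hA : q ^ ((j-i) * (d+1)) = q ^ ((j-i)*d) * q ^ (j-i) := by
            rw [← pow_add, Nat.mul_succ]
          have hB : q ^ (j-i) * q ^ (i+1) = q ^ (j+1) := by
            rw [← pow_add]; congr 1; omega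
          rw [hA]
          linear_combination q^((j-i)*d) * qbinomR q m (i+1) * qbinomR q k (j-i) * hB
        · rcases Nat.lt_or_ge m i with hmi | hmi
          · rw [qb_eq_zero q (show m < i by omega), qb_eq_zero q (show m < i+1 by omega)]
            ring
          · have : i = m := by omega
            subst this
            rw [qb_eq_zero q (show i < i+1 by omega)]
            simp [Nat.sub_self]
      rw [Finset.sum_congr rfl split, Finset.sum_add_distrib, ← Finset.mul_sum]
      have h1 : (∑ i ∈ Finset.range (j+1), q^((j-i)*(m-i)) * qbinomR q m i * qbinomR q k (j-i))
          = qbinomR q (k+m) j := ih j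
      have h2 := ih (j+1)
      rw [Finset.sum_range_succ'] at h2
      have e3 : ∀ i : ℕ, j + 1 - (i+1) = j - i := fun i => by omega
      simp only [e3, Nat.sub_zero] at h2 ⊢
      have hP : qbinomR q (k+(m+1)) (j+1) = qbinomR q (k+m) j + q^(j+1) * qbinomR q (k+m) (j+1) := by
        have e : k + (m+1) = (k+m) + 1 := by omega
        rw [e, qb_succ]
      have hq3 : q ^ ((j+1)*(m+1)) = q^(j+1) * q^((j+1)*m) := by
        rw [← pow_add]; congr 1; ring
      rw [hP, hq3]
      simp only [qb_zero, mul_one] at h2 ⊢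
      linear_combination h1 + q^(j+1) * h2

lemma V2 (r : ℕ) : ∀ t j : ℕ,
    (∑ i ∈ Finset.range (j+1), q^(i*t) * qbinomR q (r+i-1) i * qbinomR q (t+(j-i)-1) (j-i))
      = qbinomR q (r+t+j-1) j := by
  intro t
  induction t with
  | zero =>
    intro j
    rw [Finset.sum_eq_single j]
    · simp
    · intro b hb hbj
      have : 0 + (j - b) - 1 < j - b := by
        simp only [Finset.mem_range] at hb; omega
      rw [qb_eq_zero q this]; ring
    · intro h; exact absurd (Finset.mem_range.2 (by omega)) h
  | succ t iht =>
    intro j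
    induction j with
    | zero => simp
    | succ j ihj =>
      rw [Finset.sum_range_succ]
      have split : ∀ i ∈ Finset.range (j+1),
          q^(i*(t+1)) * qbinomR q (r+i-1) i * qbinomR q ((t+1)+(j+1-i)-1) (j+1-i)
          = q^(i*(t+1)) * qbinomR q (r+i-1) i * qbinomR q ((t+1)+(j-i)-1) (j-i)
            + q^(j+1) * (q^(i*t) * qbinomR q (r+i-1) i * qbinomR q (t+(j+1-i)-1) (j+1-i)) := by
        intro i hi
        have hij : i ≤ j := by have := Finset.mem_range.1 hi; omega
        have e2 : (t+1)+(j+1-i)-1 = t + (j-i) + 1 := by omega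
        have e3 : (t+1)+(j-i)-1 = t + (j-i) := by omega
        have e4 : t+(j+1-i)-1 = t + (j-i) := by omega
        have e1 : j + 1 - i = (j - i) + 1 := by omega
        rw [e2, e3, e4, e1, qb_succ]
        have hA : q ^ (i*(t+1)) = q ^ (i*t) * q ^ i := by
          rw [← pow_add, Nat.mul_succ]
        have hB : q ^ i * q ^ ((j-i)+1) = q ^ (j+1) := by
          rw [← pow_add]; congr 1; omega
        rw [hA]
        linear_combination q^(i*t) * qbinomR q (r+i-1) i * qbinomR q (t+(j-i)) ((j-i)+1) * hB
      rw [Finset.sum_congr rfl split, Finset.sum_add_distrib, ← Finset.mul_sum]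
      have h1 := ihj
      have h2 := iht (j+1)
      rw [Finset.sum_range_succ] at h2
      have e5 : r + (t+1) + (j+1) - 1 = (r + t + j) + 1 := by omega
      have e6 : r + (t+1) + j - 1 = r + t + j := by omega
      have e7 : r + t + (j+1) - 1 = r + t + j := by omega
      rw [e5, qb_succ]
      rw [e6] at h1
      rw [e7] at h2
      have e8 : j + 1 - (j+1) = 0 := by omega
      rw [e8] at h2 ⊢
      simp only [qb_zero, mul_one] at h2 ⊢
      have hq2 : q^((j+1)*(t+1)) = q^(j+1) * q^((j+1)*t) := by
        rw [← pow_add]; congr 1; ring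
      rw [hq2]
      linear_combination h1 + q^(j+1) * h2

lemma S6 (k l r t j : ℕ) :
    (∑ i ∈ Finset.range (j+1),
      (q^(l*r) * qbinomR q k i * qbinomR q (r+i-1) i * qPochhammer' q i) *
        (q^((l+i)*t) * qbinomR q (k-i) (j-i) * qbinomR q (t+(j-i)-1) (j-i) * qPochhammer' q (j-i)))
    = q^(l*(r+t)) * qbinomR q k j * qbinomR q (r+t+j-1) j * qPochhammer' q j := by
  have step : ∀ i ∈ Finset.range (j+1),
      (q^(l*r) * qbinomR q k i * qbinomR q (r+i-1) i * qPochhammer' q i) *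
        (q^((l+i)*t) * qbinomR q (k-i) (j-i) * qbinomR q (t+(j-i)-1) (j-i) * qPochhammer' q (j-i))
      = (q^(l*(r+t)) * (qbinomR q k j * qPochhammer' q j)) *
          (q^(i*t) * qbinomR q (r+i-1) i * qbinomR q (t+(j-i)-1) (j-i)) := by
    intro i hi
    have hij : i ≤ j := by have := Finset.mem_range.1 hi; omega
    have hE := E2 q k i (j-i)
    have hj : i + (j-i) = j := by omega
    rw [hj] at hE
    have hpow : q^(l*r) * q^((l+i)*t) = q^(l*(r+t)) * q^(i*t) := by
      rw [← pow_add, ← pow_add]; congr 1; ring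
    linear_combination (q^(l*r) * q^((l+i)*t) * qbinomR q (r+i-1) i * qbinomR q (t+(j-i)-1) (j-i)) * hE
      + (qbinomR q k j * qPochhammer' q j * q^(i*t) * qbinomR q (r+i-1) i * qbinomR q (t+(j-i)-1) (j-i)) * hpow
  rw [Finset.sum_congr rfl step, ← Finset.mul_sum, V2 q r t j]
  ring

lemma S5 (k l m n r j : ℕ) :
    (∑ i ∈ Finset.range (j+1),
      (q^(n*r) * qbinomR q m i * qbinomR q (r+i-1) i * qPochhammer' q i) *
        ((q^(l*(r+i)) * qbinomR q k (j-i) * qbinomR q ((r+i)+(j-i)-1) (j-i) * qPochhammer' q (j-i)) *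
          q^((l+(j-i))*(m-i))))
    = q^(l*m) * (q^((l+n)*r) * qbinomR q (k+m) j * qbinomR q (r+j-1) j * qPochhammer' q j) := by
  have step : ∀ i ∈ Finset.range (j+1),
      (q^(n*r) * qbinomR q m i * qbinomR q (r+i-1) i * qPochhammer' q i) *
        ((q^(l*(r+i)) * qbinomR q k (j-i) * qbinomR q ((r+i)+(j-i)-1) (j-i) * qPochhammer' q (j-i)) *
          q^((l+(j-i))*(m-i)))
      = (q^(n*r+(l*r+l*m)) * (qbinomR q (r+j-1) j * qPochhammer' q j)) *
          (q^((j-i)*(m-i)) * qbinomR q m i * qbinomR q k (j-i)) := by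
    intro i hi
    have hij : i ≤ j := by have := Finset.mem_range.1 hi; omega
    have hE := E1 q r i (j-i)
    have hj : i + (j-i) = j := by omega
    rw [hj] at hE
    have e1 : (r+i)+(j-i)-1 = r+j-1 := by omega
    rw [e1]
    rcases le_or_gt i m with him | him
    · obtain ⟨d, rfl⟩ : ∃ d, m = i + d := ⟨m - i, by omega⟩
      obtain ⟨e, he⟩ : ∃ e, j = i + e := ⟨j - i, by omega⟩
      subst he
      simp only [Nat.add_sub_cancel_left] at hE ⊢
      have hpow : q^(n*r) * q^(l*(r+i)) * q^((l+e)*(d)) = q^(n*r+(l*r+l*(i+d))) * q^(e*d) := by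
        rw [← pow_add, ← pow_add, ← pow_add]; congr 1; ring
      linear_combination (q^(n*r) * q^(l*(r+i)) * q^((l+e)*d) * qbinomR q (i+d) i * qbinomR q k e) * hE
        + (qbinomR q (r+(i+e)-1) (i+e) * qPochhammer' q (i+e) * qbinomR q (i+d) i * qbinomR q k e) * hpow
    · rw [qb_eq_zero q him]; ring
  rw [Finset.sum_congr rfl step, ← Finset.mul_sum, V1 q k m j]
  have hpow : q^(l*m) * q^((l+n)*r) = q^(n*r+(l*r+l*m)) := by
    rw [← pow_add]; congr 1; ring
  linear_combination (qbinomR q (k+m) j * qbinomR q (r+j-1) j * qPochhammer' q j) * hpow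

end ScalarLemmas

section ModuleLemmas

variable {R : Type*} [CommRing R] (q : R)

lemma mu_single (k l m n : ℕ) :
    muqR q (Finsupp.single (k,l) (1:R)) (Finsupp.single (m,n) (1:R))
      = q ^ (l * m) • Finsupp.single (k + m, l + n) (1 : R) := by
  have h : muqR q (Finsupp.single ((k,l) : ℕ×ℕ) (1:R)) (Finsupp.single ((m,n) : ℕ×ℕ) (1:R))
      = q ^ (((k,l) : ℕ×ℕ).2 * ((m,n) : ℕ×ℕ).1) •
        Finsupp.single (((k,l) : ℕ×ℕ).1 + ((m,n) : ℕ×ℕ).1, ((k,l) : ℕ×ℕ).2 + ((m,n) : ℕ×ℕ).2) (1 : R) := by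
    rw [muqR, Finsupp.lift_apply, Finsupp.sum_single_index (by simp), one_smul,
      Finsupp.lift_apply, Finsupp.sum_single_index (by simp), one_smul]
  exact h

lemma psi_single (k l r : ℕ) :
    psiqR q (Finsupp.single (k,l) (1:R) ⊗ₜ[R] AddMonoidAlgebra.single r (1:R))
      = ∑ i ∈ Finset.range (k + 1),
          (q ^ (l * r) * qbinomR q k i * qbinomR q (r + i - 1) i
              * qPochhammer' q i) •
            ((AddMonoidAlgebra.single (r + i) (1:R) : BpolyR R)
              ⊗ₜ[R] (Finsupp.single (k - i, l + i) (1 : R) : AqR R)) := by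
  rw [psiqR, TensorProduct.lift.tmul, Finsupp.lift_apply,
    Finsupp.sum_single_index (by simp), one_smul]
  have hc : ((AddMonoidAlgebra.coeffLinearEquiv R).toLinearMap (AddMonoidAlgebra.single r (1:R)) : ℕ →₀ R) = Finsupp.single r 1 := rfl
  rw [LinearMap.comp_apply, hc]
  erw [Finsupp.lift_apply]
  rw [Finsupp.sum_single_index (by simp), one_smul]

end ModuleLemmas


section SumHelpers

variable {R : Type*} [CommRing R]

lemma sum_if_collapse {M : Type*} [AddCommMonoid M] (f : ℕ → ℕ → M) (m k N : ℕ)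
    (hN : m + k < N) :
    (∑ i ∈ Finset.range (m+1), ∑ s ∈ Finset.range (k+1), f i s)
      = ∑ j ∈ Finset.range N, ∑ i ∈ Finset.range (m+1), ∑ s ∈ Finset.range (k+1),
          (if i + s = j then f i s else 0) := by
  symm
  rw [Finset.sum_comm]
  apply Finset.sum_congr rfl
  intro i hi
  rw [Finset.sum_comm]
  apply Finset.sum_congr rfl
  intro s hs
  rw [Finset.sum_ite_eq (Finset.range N) (i+s) (fun _ => f i s)]
  rw [if_pos]
  exact Finset.mem_range.2 (by
    have := Finset.mem_range.1 hi
    have := Finset.mem_range.1 hs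
    omega)

lemma conv_helper {M : Type*} [AddCommMonoid M] (f : ℕ → ℕ → M) (m k j : ℕ)
    (h1 : ∀ i s, m < i → f i s = 0) (h2 : ∀ i s, k < s → f i s = 0) :
    (∑ i ∈ Finset.range (m+1), ∑ s ∈ Finset.range (k+1), if i + s = j then f i s else 0)
      = ∑ i ∈ Finset.range (j+1), f i (j-i) := by
  have inner : ∀ i, (∑ s ∈ Finset.range (k+1), if i + s = j then f i s else 0)
      = if i ≤ j then f i (j-i) else 0 := by
    intro i
    rcases le_or_gt i j with hij | hij
    · rw [if_pos hij]
      rcases le_or_gt (j - i) k with hk | hk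
      · rw [Finset.sum_eq_single (j-i)]
        · rw [if_pos (by omega)]
        · intro b _ hb; rw [if_neg (by omega)]
        · intro hc; exact absurd (Finset.mem_range.2 (by omega)) hc
      · rw [h2 i (j-i) hk, Finset.sum_eq_zero]
        intro b hb
        rw [if_neg (by have := Finset.mem_range.1 hb; omega)]
    · rw [if_neg (by omega), Finset.sum_eq_zero]
      intro b hb
      rw [if_neg (by omega)]
  simp only [inner]
  have A : (∑ x ∈ Finset.range (m+1), if x ≤ j then f x (j-x) else 0)
      = ∑ x ∈ Finset.range (m+j+2), if x ≤ j then f x (j-x) else 0 :=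
    Finset.sum_subset (Finset.range_subset_range.2 (by omega))
      (fun x _ hx => by
        have hxm : m < x := by
          have : ¬ x < m + 1 := fun hc => hx (Finset.mem_range.2 hc)
          omega
        rcases le_or_gt x j with h | h
        · rw [if_pos h, h1 x (j-x) hxm]
        · rw [if_neg (by omega)])
  have B : (∑ x ∈ Finset.range (j+1), if x ≤ j then f x (j-x) else 0)
      = ∑ x ∈ Finset.range (m+j+2), if x ≤ j then f x (j-x) else 0 :=
    Finset.sum_subset (Finset.range_subset_range.2 (by omega))
      (fun x _ hx => by
        have : ¬ x < j + 1 := fun hc => hx (Finset.mem_range.2 hc)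
        rw [if_neg (by omega)])
  rw [A, ← B]
  apply Finset.sum_congr rfl
  intro x hx
  rw [if_pos (by have := Finset.mem_range.1 hx; omega)]

end SumHelpers


section KeyLemmas

variable {R : Type*} [CommRing R] (q : R)

set_option synthInstance.maxHeartbeats 1000000 in
set_option maxHeartbeats 1000000 in
lemma twL_psi (k l w m' n' : ℕ) :
    twL (TensorProduct.lift (muqR q)) (psiqR q)
      (Finsupp.single (k,l) (1:R) ⊗ₜ[R]
        ((AddMonoidAlgebra.single w (1:R) : BpolyR R) ⊗ₜ[R] (Finsupp.single (m',n') (1:R) : AqR R)))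
    = ∑ s ∈ Finset.range (k+1),
        ((q^(l*w) * qbinomR q k s * qbinomR q (w+s-1) s * qPochhammer' q s) * q^((l+s)*m')) •
          ((AddMonoidAlgebra.single (w+s) (1:R) : BpolyR R)
            ⊗ₜ[R] (Finsupp.single ((k-s)+m', (l+s)+n') (1:R) : AqR R)) := by
  rw [twL]
  simp only [LinearMap.coe_comp, Function.comp_apply, LinearEquiv.coe_coe,
    TensorProduct.assoc_symm_tmul, LinearMap.rTensor_tmul]
  rw [psi_single, TensorProduct.sum_tmul]
  simp only [TensorProduct.smul_tmul', map_sum, map_smul, TensorProduct.assoc_tmul,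
    LinearMap.lTensor_tmul, TensorProduct.lift.tmul]
  apply Finset.sum_congr rfl
  intro s hs
  rw [mu_single, TensorProduct.tmul_smul, TensorProduct.smul_tmul',
    smul_smul, mul_comm (q^((l+s)*m'))]

set_option maxHeartbeats 1000000 in
set_option synthInstance.maxHeartbeats 1000000 in
lemma key4 (k l m n r : ℕ) :
    psiqR q (muqR q (Finsupp.single (k,l) (1:R)) (Finsupp.single (m,n) (1:R)) ⊗ₜ[R]
        (AddMonoidAlgebra.single r (1:R) : BpolyR R))
    = twL (TensorProduct.lift (muqR q)) (psiqR q)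
        (Finsupp.single (k,l) (1:R) ⊗ₜ[R]
          psiqR q (Finsupp.single (m,n) (1:R) ⊗ₜ[R] (AddMonoidAlgebra.single r (1:R) : BpolyR R))) := by
  rw [mu_single, ← TensorProduct.smul_tmul', map_smul, psi_single, psi_single,
    TensorProduct.tmul_sum, map_sum, Finset.smul_sum]
  simp only [TensorProduct.tmul_smul, map_smul, smul_smul, Finset.smul_sum]
  have rhs_eq : ∀ i ∈ Finset.range (m+1),
      (q ^ (n * r) * qbinomR q m i * qbinomR q (r + i - 1) i * qPochhammer' q i) •
        (twL (TensorProduct.lift (muqR q)) (psiqR q))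
          ((Finsupp.single (k,l) (1:R)) ⊗ₜ[R]
            ((AddMonoidAlgebra.single (r+i) (1:R) : BpolyR R) ⊗ₜ[R] (Finsupp.single (m-i, n+i) (1:R) : AqR R)))
      = ∑ s ∈ Finset.range (k+1),
          ((q ^ (n * r) * qbinomR q m i * qbinomR q (r + i - 1) i * qPochhammer' q i) *
            ((q^(l*(r+i)) * qbinomR q k s * qbinomR q ((r+i)+s-1) s * qPochhammer' q s) * q^((l+s)*(m-i)))) •
            ((AddMonoidAlgebra.single ((r+i)+s) (1:R) : BpolyR R)
              ⊗ₜ[R] (Finsupp.single ((k-s)+(m-i), (l+s)+(n+i)) (1:R) : AqR R)) := by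
    intro i hi
    rw [twL_psi, Finset.smul_sum]
    simp only [smul_smul]
  rw [Finset.sum_congr rfl rhs_eq]
  rw [sum_if_collapse
    (fun i s => (q ^ (n * r) * qbinomR q m i * qbinomR q (r + i - 1) i * qPochhammer' q i *
            (q ^ (l * (r + i)) * qbinomR q k s * qbinomR q (r + i + s - 1) s * qPochhammer' q s *
              q ^ ((l + s) * (m - i)))) •
          ((AddMonoidAlgebra.single (r + i + s) (1:R) : BpolyR R)
            ⊗ₜ[R] (Finsupp.single (k - s + (m - i), l + s + (n + i)) (1:R) : AqR R)))
    m k (k+m+1) (by omega)]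
  apply Finset.sum_congr rfl
  intro j hj
  rw [conv_helper _ m k j
    (fun i s hi => by rw [qb_eq_zero q hi]; simp)
    (fun i s hs => by rw [qb_eq_zero q hs]; simp)]
  have tstep : ∀ i ∈ Finset.range (j+1),
      ((q ^ (n * r) * qbinomR q m i * qbinomR q (r + i - 1) i * qPochhammer' q i *
            (q ^ (l * (r + i)) * qbinomR q k (j-i) * qbinomR q (r + i + (j-i) - 1) (j-i) * qPochhammer' q (j-i) *
              q ^ ((l + (j-i)) * (m - i)))) •
          ((AddMonoidAlgebra.single (r + i + (j-i)) (1:R) : BpolyR R)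
            ⊗ₜ[R] (Finsupp.single (k - (j-i) + (m - i), l + (j-i) + (n + i)) (1:R) : AqR R)))
      = ((q ^ (n * r) * qbinomR q m i * qbinomR q (r + i - 1) i * qPochhammer' q i) *
            ((q ^ (l * (r + i)) * qbinomR q k (j-i) * qbinomR q ((r + i) + (j-i) - 1) (j-i) * qPochhammer' q (j-i)) *
              q ^ ((l + (j-i)) * (m - i)))) •
          ((AddMonoidAlgebra.single (r + j) (1:R) : BpolyR R)
            ⊗ₜ[R] (Finsupp.single (k + m - j, l + n + j) (1:R) : AqR R)) := by
    intro i hi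
    have hij : i ≤ j := by have := Finset.mem_range.1 hi; omega
    by_cases him : i ≤ m
    · by_cases hsk : j - i ≤ k
      · have e1 : r + i + (j-i) = r + j := by omega
        have e2 : k - (j-i) + (m - i) = k + m - j := by omega
        have e3 : l + (j-i) + (n + i) = l + n + j := by omega
        rw [e1, e2, e3]
      · rw [qb_eq_zero q (show k < j - i by omega)]; simp
    · rw [qb_eq_zero q (show m < i by omega)]; simp
  rw [Finset.sum_congr rfl tstep, ← Finset.sum_smul, S5]

lemma bsingle_mul {R : Type*} [CommRing R] (a b : ℕ) (u v : BpolyR R)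
    (hu : u = AddMonoidAlgebra.single a (1:R)) (hv : v = AddMonoidAlgebra.single b (1:R)) :
    u * v = AddMonoidAlgebra.single (a+b) (1:R) := by
  subst hu hv
  have h := AddMonoidAlgebra.single_mul_single (R := R) (M := ℕ) a b (1:R) (1:R)
  rw [one_mul] at h
  exact h

set_option maxHeartbeats 1000000 in
set_option synthInstance.maxHeartbeats 1000000 in
lemma twR_psi (w k' l' t : ℕ) :
    twR (LinearMap.mul' R (BpolyR R)) (psiqR q)
      (((AddMonoidAlgebra.single w (1:R) : BpolyR R) ⊗ₜ[R] (Finsupp.single (k',l') (1:R) : AqR R))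
        ⊗ₜ[R] (AddMonoidAlgebra.single t (1:R) : BpolyR R))
    = ∑ s ∈ Finset.range (k'+1),
        (q^(l'*t) * qbinomR q k' s * qbinomR q (t+s-1) s * qPochhammer' q s) •
          ((AddMonoidAlgebra.single (w+(t+s)) (1:R) : BpolyR R)
            ⊗ₜ[R] (Finsupp.single (k'-s, l'+s) (1:R) : AqR R)) := by
  rw [twR]
  simp only [LinearMap.coe_comp, Function.comp_apply, LinearEquiv.coe_coe,
    TensorProduct.assoc_tmul, LinearMap.lTensor_tmul]
  rw [psi_single, TensorProduct.tmul_sum]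
  simp only [TensorProduct.tmul_smul, map_sum, map_smul, TensorProduct.assoc_symm_tmul,
    LinearMap.rTensor_tmul, LinearMap.mul'_apply]
  apply Finset.sum_congr rfl
  intro s hs
  have h := AddMonoidAlgebra.single_mul_single (R := R) (M := ℕ) w (t+s) (1:R) (1:R)
  rw [one_mul] at h
  congr 1
  exact congrArg (fun z => z ⊗ₜ[R] (Finsupp.single (k'-s, l'+s) (1:R) : AqR R)) h

set_option maxHeartbeats 1000000 in
set_option synthInstance.maxHeartbeats 1000000 in
lemma key5 (k l r t : ℕ) (u v : BpolyR R)
    (hu : u = AddMonoidAlgebra.single r (1:R)) (hv : v = AddMonoidAlgebra.single t (1:R)) :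
    psiqR q (Finsupp.single (k,l) (1:R) ⊗ₜ[R] (u * v))
    = twR (LinearMap.mul' R (BpolyR R)) (psiqR q)
        (psiqR q (Finsupp.single (k,l) (1:R) ⊗ₜ[R] u) ⊗ₜ[R] v) := by
  rw [bsingle_mul r t u v hu hv]
  subst hu hv
  rw [psi_single, psi_single, TensorProduct.sum_tmul]
  simp only [← TensorProduct.smul_tmul', map_sum, map_smul]
  have rhs_eq : ∀ i ∈ Finset.range (k+1),
      (q ^ (l * r) * qbinomR q k i * qbinomR q (r + i - 1) i * qPochhammer' q i) •
        (twR (LinearMap.mul' R (BpolyR R)) (psiqR q)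
          (((AddMonoidAlgebra.single (r+i) (1:R) : BpolyR R) ⊗ₜ[R] (Finsupp.single (k-i, l+i) (1:R) : AqR R))
            ⊗ₜ[R] (AddMonoidAlgebra.single t (1:R) : BpolyR R)))
      = ∑ s ∈ Finset.range (k+1),
          ((q ^ (l * r) * qbinomR q k i * qbinomR q (r + i - 1) i * qPochhammer' q i) *
            (q^((l+i)*t) * qbinomR q (k-i) s * qbinomR q (t+s-1) s * qPochhammer' q s)) •
            ((AddMonoidAlgebra.single ((r+i)+(t+s)) (1:R) : BpolyR R)
              ⊗ₜ[R] (Finsupp.single ((k-i)-s, (l+i)+s) (1:R) : AqR R)) := by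
    intro i hi
    rw [twR_psi, Finset.smul_sum]
    rw [Finset.sum_subset (Finset.range_subset_range.2 (show k-i+1 ≤ k+1 by omega))
      (fun s _ hs => by
        have : k - i < s := by
          have : ¬ s < k - i + 1 := fun hc => hs (Finset.mem_range.2 hc)
          omega
        rw [qb_eq_zero q this]; simp)]
    simp only [smul_smul]
  rw [Finset.sum_congr rfl rhs_eq]
  rw [sum_if_collapse
    (fun i s => ((q ^ (l * r) * qbinomR q k i * qbinomR q (r + i - 1) i * qPochhammer' q i) *
            (q^((l+i)*t) * qbinomR q (k-i) s * qbinomR q (t+s-1) s * qPochhammer' q s)) •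
            ((AddMonoidAlgebra.single ((r+i)+(t+s)) (1:R) : BpolyR R)
              ⊗ₜ[R] (Finsupp.single ((k-i)-s, (l+i)+s) (1:R) : AqR R)))
    k k (k+k+1) (by omega)]
  rw [Finset.sum_subset (Finset.range_subset_range.2 (show k+1 ≤ k+k+1 by omega))
    (fun j _ hj => by
      have : k < j := by
        have : ¬ j < k + 1 := fun hc => hj (Finset.mem_range.2 hc)
        omega
      rw [qb_eq_zero q this]; simp)]
  apply Finset.sum_congr rfl
  intro j hj
  rw [conv_helper _ k k j
    (fun i s hi => by rw [qb_eq_zero q hi]; simp)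
    (fun i s hs => by rw [qb_eq_zero q (show k - i < s by omega)]; simp)]
  have tstep : ∀ i ∈ Finset.range (j+1),
      ((q ^ (l * r) * qbinomR q k i * qbinomR q (r + i - 1) i * qPochhammer' q i) *
            (q^((l+i)*t) * qbinomR q (k-i) (j-i) * qbinomR q (t+(j-i)-1) (j-i) * qPochhammer' q (j-i))) •
            ((AddMonoidAlgebra.single ((r+i)+(t+(j-i))) (1:R) : BpolyR R)
              ⊗ₜ[R] (Finsupp.single ((k-i)-(j-i), (l+i)+(j-i)) (1:R) : AqR R))
      = ((q ^ (l * r) * qbinomR q k i * qbinomR q (r + i - 1) i * qPochhammer' q i) *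
            (q^((l+i)*t) * qbinomR q (k-i) (j-i) * qbinomR q (t+(j-i)-1) (j-i) * qPochhammer' q (j-i))) •
            ((AddMonoidAlgebra.single (r+t+j) (1:R) : BpolyR R)
              ⊗ₜ[R] (Finsupp.single (k-j, l+j) (1:R) : AqR R)) := by
    intro i hi
    have hij : i ≤ j := by have := Finset.mem_range.1 hi; omega
    have e1 : (r+i)+(t+(j-i)) = r+t+j := by omega
    have e2 : (k-i)-(j-i) = k-j := by omega
    have e3 : (l+i)+(j-i) = l+j := by omega
    rw [e1, e2, e3]
  rw [Finset.sum_congr rfl tstep, ← Finset.sum_smul, S6]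

end KeyLemmas


lemma s_single {R : Type*} [CommRing R] {α : Type*} (a : α) (b : R) :
    Finsupp.single a b = b • Finsupp.single a (1:R) := by
  rw [Finsupp.smul_single, smul_eq_mul, mul_one]

lemma b_single {R : Type*} [CommRing R] (a : ℕ) (b : R) :
    (AddMonoidAlgebra.single a b : BpolyR R) = b • AddMonoidAlgebra.single a (1:R) := by
  rw [AddMonoidAlgebra.smul_single, smul_eq_mul, mul_one]

section Assembly

variable {R : Type*} [CommRing R] (q : R)

lemma key6 (r : ℕ) :
    psiqR q (Finsupp.single (0,0) (1:R) ⊗ₜ[R] (AddMonoidAlgebra.single r (1:R) : BpolyR R))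
      = (AddMonoidAlgebra.single r (1:R) : BpolyR R) ⊗ₜ[R] (Finsupp.single (0,0) (1:R) : AqR R) := by
  rw [psi_single]
  simp

lemma key7 (k l : ℕ) :
    psiqR q (Finsupp.single (k,l) (1:R) ⊗ₜ[R] (AddMonoidAlgebra.single 0 (1:R) : BpolyR R))
      = (AddMonoidAlgebra.single 0 (1:R) : BpolyR R) ⊗ₜ[R] (Finsupp.single (k,l) (1:R) : AqR R) := by
  rw [psi_single, Finset.sum_eq_single 0]
  · simp
  · intro i hi hi0
    rw [qb_eq_zero q (show 0 + i - 1 < i by omega)]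
    simp
  · intro h; exact absurd (Finset.mem_range.2 (by omega)) h

lemma muq_assoc : ∀ x y z : AqR R,
    muqR q (muqR q x y) z = muqR q x (muqR q y z) := by
  have key : ∀ (a b c : ℕ × ℕ),
      muqR q (muqR q (Finsupp.single a (1:R)) (Finsupp.single b 1)) (Finsupp.single c 1)
        = muqR q (Finsupp.single a 1) (muqR q (Finsupp.single b 1) (Finsupp.single c 1)) := by
    rintro ⟨k,l⟩ ⟨m,n⟩ ⟨u,v⟩
    rw [mu_single, mu_single, map_smul, LinearMap.smul_apply, mu_single, map_smul, mu_single,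
      smul_smul, smul_smul]
    have e : (k + m + u, l + n + v) = (k + (m + u), l + (n + v)) := by
      simp [Nat.add_assoc]
    rw [e]
    congr 1
    rw [← pow_add, ← pow_add]
    congr 1
    ring
  intro x y z
  induction x using Finsupp.induction_linear with
  | zero => simp
  | add f g hf hg => simp only [map_add, LinearMap.add_apply, hf, hg]
  | single a b =>
    induction y using Finsupp.induction_linear with
    | zero => simp
    | add f g hf hg => simp only [map_add, LinearMap.add_apply, hf, hg]
    | single a' b' =>
      induction z using Finsupp.induction_linear with
      | zero => simp
      | add f g hf hg => simp only [map_add, hf, hg]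
      | single a'' b'' =>
        rw [s_single a b, s_single a' b', s_single a'' b'']
        simp only [map_smul, LinearMap.smul_apply, smul_smul]
        rw [key a a' a'']
        congr 1
        ring

lemma muq_one_left : ∀ x : AqR R, muqR q (Finsupp.single (0,0) 1) x = x := by
  intro x
  induction x using Finsupp.induction_linear with
  | zero => simp
  | add f g hf hg => rw [map_add, hf, hg]
  | single a b =>
    obtain ⟨m, n⟩ := a
    rw [s_single (m,n) b, map_smul, mu_single]
    simp

lemma muq_one_right : ∀ x : AqR R, muqR q x (Finsupp.single (0,0) 1) = x := by
  intro x
  induction x using Finsupp.induction_linear with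
  | zero => simp
  | add f g hf hg => rw [map_add, LinearMap.add_apply, hf, hg]
  | single a b =>
    obtain ⟨m, n⟩ := a
    rw [s_single (m,n) b, map_smul, LinearMap.smul_apply, mu_single]
    simp

lemma psi_unit_left : ∀ u : BpolyR R,
    psiqR q (Finsupp.single (0,0) 1 ⊗ₜ[R] u) = u ⊗ₜ[R] Finsupp.single (0,0) 1 := by
  intro u
  induction u using AddMonoidAlgebra.induction_linear with
  | zero => simp
  | add f g hf hg => rw [TensorProduct.tmul_add, map_add, hf, hg, TensorProduct.add_tmul]
  | single r b =>
    rw [b_single r b, TensorProduct.tmul_smul, map_smul, key6, TensorProduct.smul_tmul']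

lemma psi_unit_right : ∀ x : AqR R,
    psiqR q (x ⊗ₜ[R] (1 : BpolyR R)) = (1 : BpolyR R) ⊗ₜ[R] x := by
  have h1 : (1 : BpolyR R) = AddMonoidAlgebra.single 0 1 := rfl
  intro x
  induction x using Finsupp.induction_linear with
  | zero => simp
  | add f g hf hg => rw [TensorProduct.add_tmul, map_add, hf, hg, TensorProduct.tmul_add]
  | single a b =>
    obtain ⟨k, l⟩ := a
    rw [s_single (k,l) b, ← TensorProduct.smul_tmul', map_smul, h1, key7, TensorProduct.tmul_smul]

lemma psi_mul_left : ∀ (x y : AqR R) (u : BpolyR R),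
    psiqR q (muqR q x y ⊗ₜ[R] u)
      = twL (TensorProduct.lift (muqR q)) (psiqR q) (x ⊗ₜ[R] psiqR q (y ⊗ₜ[R] u)) := by
  intro x y u
  induction x using Finsupp.induction_linear with
  | zero => simp
  | add f g hf hg =>
    rw [map_add, LinearMap.add_apply, TensorProduct.add_tmul, map_add, hf, hg,
      TensorProduct.add_tmul, map_add]
  | single a b =>
    induction y using Finsupp.induction_linear with
    | zero => simp
    | add f g hf hg =>
      rw [map_add, TensorProduct.add_tmul, map_add, hf, hg, TensorProduct.add_tmul, map_add,
        TensorProduct.tmul_add, map_add]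
    | single a' b' =>
      induction u using AddMonoidAlgebra.induction_linear with
      | zero => simp
      | add f g hf hg =>
        rw [TensorProduct.tmul_add, map_add, hf, hg, TensorProduct.tmul_add, map_add,
          TensorProduct.tmul_add, map_add]
      | single r b'' =>
        obtain ⟨k, l⟩ := a
        obtain ⟨m, n⟩ := a'
        rw [s_single (k,l) b, s_single (m,n) b', b_single r b'']
        simp only [map_smul, LinearMap.smul_apply, ← TensorProduct.smul_tmul',
          TensorProduct.tmul_smul, map_smul, smul_smul]
        rw [key4]
        congr 1
        ring

lemma psi_mul_right : ∀ (x : AqR R) (u v : BpolyR R),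
    psiqR q (x ⊗ₜ[R] (u * v))
      = twR (LinearMap.mul' R (BpolyR R)) (psiqR q) (psiqR q (x ⊗ₜ[R] u) ⊗ₜ[R] v) := by
  intro x u v
  induction x using Finsupp.induction_linear with
  | zero => simp
  | add f g hf hg =>
    rw [TensorProduct.add_tmul, map_add, hf, hg, TensorProduct.add_tmul, map_add,
      TensorProduct.add_tmul, map_add]
  | single a b =>
    induction u using AddMonoidAlgebra.induction_linear with
    | zero => simp
    | add f g hf hg =>
      rw [add_mul, TensorProduct.tmul_add, map_add, hf, hg, TensorProduct.tmul_add, map_add,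
        TensorProduct.add_tmul, map_add]
    | single r b' =>
      induction v using AddMonoidAlgebra.induction_linear with
      | zero => simp
      | add f g hf hg =>
        rw [mul_add, TensorProduct.tmul_add, map_add, hf, hg, TensorProduct.tmul_add, map_add]
      | single t b'' =>
        obtain ⟨k, l⟩ := a
        rw [s_single (k,l) b, b_single r b', b_single t b'']
        simp only [map_smul, LinearMap.smul_apply, ← TensorProduct.smul_tmul',
          TensorProduct.tmul_smul, map_smul, smul_smul, smul_mul_assoc, mul_smul_comm]
        rw [key5 q k l r t _ _ rfl rfl]
        congr 1
        ring

end Assembly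

/-- Example 3.3, closed form of the deformed twisting. -/
theorem deformed_twisting_closed_form {R : Type*} [CommRing R] (q : R) :
    letI e : AqR R := Finsupp.single (0, 0) 1      -- the unit a⁰ā⁰ of A_q
    letI μA : AqR R ⊗[R] AqR R →ₗ[R] AqR R := TensorProduct.lift (muqR q)
    letI μB := LinearMap.mul' R (BpolyR R)
    letI ψ := psiqR q
    -- A_q is an associative unital R-algebra
    (∀ x y z : AqR R, muqR q (muqR q x y) z = muqR q x (muqR q y z)) ∧
    (∀ x : AqR R, muqR q e x = x) ∧ (∀ x : AqR R, muqR q x e = x) ∧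
    -- Ψ_q is a twisting map for A_q and B
    (∀ (x y : AqR R) (u : BpolyR R),
        ψ (muqR q x y ⊗ₜ[R] u) = twL μA ψ (x ⊗ₜ[R] ψ (y ⊗ₜ[R] u))) ∧
    (∀ (x : AqR R) (u v : BpolyR R),
        ψ (x ⊗ₜ[R] (u * v)) = twR μB ψ (ψ (x ⊗ₜ[R] u) ⊗ₜ[R] v)) ∧
    (∀ u : BpolyR R, ψ (e ⊗ₜ[R] u) = u ⊗ₜ[R] e) ∧
    (∀ x : AqR R, ψ (x ⊗ₜ[R] (1 : BpolyR R)) = (1 : BpolyR R) ⊗ₜ[R] x) := by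
  exact ⟨muq_assoc q, muq_one_left q, muq_one_right q, psi_mul_left q, psi_mul_right q,
    psi_unit_left q, psi_unit_right q⟩
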